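/- Let a ∈ ℂ∖{0} and let x = (x₁,x₂,x₃,x₄) ∈ ℂ⁴ be such that a is an eigenvalue of M(x), i.e. det(M(x) − a·I) = 0. Then M(x) − a·I has rank 1 if and only if x = (−a⁻¹, a, −a⁻¹, a); otherwise M(x) − a·I has rank 2. -/

import Mathlib

open Matrix

/-- The Noumi–Yamada topological monodromy matrix `M(x₁,x₂,x₃,x₄)`. -/
def NYmonodromy (x₁ x₂ x₃ x₄ : ℂ) : Matrix (Fin 3) (Fin 3) ℂ :=
  !![x₄, 0, x₁ * x₄ + 1;
     1, 0, x₁;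
     x₃, 1, x₁ * x₃ + x₂]

lemma rank_le_two_of_det_zero (A : Matrix (Fin 3) (Fin 3) ℂ) (h : A.det = 0) : A.rank ≤ 2 := by
  obtain ⟨v, hv, hmv⟩ := (Matrix.exists_mulVec_eq_zero_iff).mpr h
  have hker : 0 < Module.finrank ℂ (LinearMap.ker A.mulVecLin) := by
    rw [Module.finrank_pos_iff]
    exact ⟨⟨⟨v, by simpa using hmv⟩, 0, by simpa [Subtype.ext_iff] using hv⟩⟩
  have := LinearMap.finrank_range_add_finrank_ker A.mulVecLin
  simp only [Module.finrank_pi, Fintype.card_fin] at this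
  unfold Matrix.rank
  omega

lemma two_le_rank_of_rows (A : Matrix (Fin 3) (Fin 3) ℂ) (i j : Fin 3)
    (h : LinearIndependent ℂ ![A i, A j]) : 2 ≤ A.rank := by
  rw [Matrix.rank_eq_finrank_span_row]
  have hle : Submodule.span ℂ (Set.range ![A i, A j]) ≤ Submodule.span ℂ (Set.range A) := by
    apply Submodule.span_mono
    rintro v ⟨k, rfl⟩
    fin_cases k <;> exact ⟨_, rfl⟩
  have := Submodule.finrank_mono hle
  rwa [finrank_span_eq_card h, Fintype.card_fin] at this


/-- If `a ≠ 0` is an eigenvalue of `M(x)`, then `M(x) − a·I` has rank `1` iff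
`x = (−a⁻¹, a, −a⁻¹, a)`; otherwise `M(x) − a·I` has rank `2`. -/
theorem stmt_10 (a : ℂ) (ha : a ≠ 0) (x₁ x₂ x₃ x₄ : ℂ)
    (heig : (NYmonodromy x₁ x₂ x₃ x₄ - a • (1 : Matrix (Fin 3) (Fin 3) ℂ)).det = 0) :
    ((NYmonodromy x₁ x₂ x₃ x₄ - a • (1 : Matrix (Fin 3) (Fin 3) ℂ)).rank = 1 ↔
      (x₁, x₂, x₃, x₄) = (-a⁻¹, a, -a⁻¹, a)) ∧
    ((x₁, x₂, x₃, x₄) ≠ (-a⁻¹, a, -a⁻¹, a) →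
      (NYmonodromy x₁ x₂ x₃ x₄ - a • (1 : Matrix (Fin 3) (Fin 3) ℂ)).rank = 2) := by
  set A : Matrix (Fin 3) (Fin 3) ℂ :=
    NYmonodromy x₁ x₂ x₃ x₄ - a • (1 : Matrix (Fin 3) (Fin 3) ℂ) with hA
  have hAB : A = !![x₄ - a, 0, x₁ * x₄ + 1; 1, -a, x₁; x₃, 1, x₁ * x₃ + x₂ - a] := by
    ext i j
    fin_cases i <;> fin_cases j <;>
      simp [hA, NYmonodromy, Matrix.one_apply] <;> ring
  have hr0 : A 0 = ![x₄ - a, 0, x₁ * x₄ + 1] := by rw [hAB]; rfl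
  have hr1 : A 1 = ![1, -a, x₁] := by rw [hAB]; rfl
  have hr2 : A 2 = ![x₃, 1, x₁ * x₃ + x₂ - a] := by rw [hAB]; rfl
  have key : (x₁, x₂, x₃, x₄) ≠ (-a⁻¹, a, -a⁻¹, a) → A.rank = 2 := by
    intro hne
    have hle := rank_le_two_of_det_zero A heig
    have hge : 2 ≤ A.rank := by
      by_cases hc : x₄ = a ∧ x₁ = -a⁻¹
      · -- rows 1 and 2 independent
        apply two_le_rank_of_rows A 1 2
        rw [hr1, hr2, LinearIndependent.pair_iff]
        intro s t hst
        have h0 := congrFun hst 0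
        have h1 := congrFun hst 1
        have h2 := congrFun hst 2
        simp [Matrix.smul_cons] at h0 h1 h2
        obtain ⟨hx4, hx1⟩ := hc
        by_cases hs : s = 0
        · refine ⟨hs, ?_⟩
          rw [hs] at h1
          linear_combination h1
        · exfalso
          have ht : t = a * s := by linear_combination h1
          have h13 : 1 + a * x₃ = 0 := by
            have : s * (1 + a * x₃) = 0 := by linear_combination h0 - x₃ * ht
            exact (mul_eq_zero.mp this).resolve_left hs
          have ha' : a⁻¹ * a = 1 := inv_mul_cancel₀ ha
          have hx3 : x₃ = -a⁻¹ := by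
            field_simp
            linear_combination h13
          apply hne
          simp only [Prod.mk.injEq]
          refine ⟨hx1, ?_, hx3, hx4⟩
          have h2' : s * (x₁ + a * (x₁ * x₃ + x₂ - a)) = 0 := by
            linear_combination h2 - (x₁ * x₃ + x₂ - a) * ht
          have h2'' : x₁ + a * (x₁ * x₃ + x₂ - a) = 0 := (mul_eq_zero.mp h2').resolve_left hs
          rw [hx1, hx3] at h2''
          have hfin : a * (x₂ - a) = 0 := by linear_combination h2'' - a⁻¹ * ha'
          have := (mul_eq_zero.mp hfin).resolve_left ha
          linear_combination this
      · -- rows 0 and 1 independent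
        apply two_le_rank_of_rows A 0 1
        rw [hr0, hr1, LinearIndependent.pair_iff]
        intro s t hst
        have h0 := congrFun hst 0
        have h1 := congrFun hst 1
        have h2 := congrFun hst 2
        simp [Matrix.smul_cons] at h0 h1 h2
        have ht : t = 0 := h1.resolve_right ha
        subst ht
        refine ⟨?_, rfl⟩
        by_contra hs
        apply hc
        have hx4 : x₄ = a := by
          have : s * (x₄ - a) = 0 := by linear_combination h0
          have := (mul_eq_zero.mp this).resolve_left hs
          linear_combination this
        refine ⟨hx4, ?_⟩
        have h14 : x₁ * x₄ + 1 = 0 := by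
          have : s * (x₁ * x₄ + 1) = 0 := by linear_combination h2
          exact (mul_eq_zero.mp this).resolve_left hs
        rw [hx4] at h14
        field_simp
        linear_combination h14
    omega
  constructor
  · constructor
    · intro h1
      by_contra hne
      have := key hne
      omega
    · rintro heq
      obtain ⟨h1, h2, h3, h4⟩ : x₁ = -a⁻¹ ∧ x₂ = a ∧ x₃ = -a⁻¹ ∧ x₄ = a := by
        simpa [Prod.ext_iff] using heq
      have hz0 : A 0 = 0 := by
        rw [hr0]
        funext k
        fin_cases k <;> simp [h1, h4] <;> field_simp <;> norm_num
      have hz2 : A 2 = (-a⁻¹) • A 1 := by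
        rw [hr1, hr2]
        funext k
        fin_cases k <;> simp [h1, h2, h3] <;> field_simp <;> ring
      have hv : A 1 ≠ 0 := by
        intro h
        have := congrFun h 0
        rw [hr1] at this
        simpa using this
      rw [Matrix.rank_eq_finrank_span_row]
      have hspan : Submodule.span ℂ (Set.range A.row) = Submodule.span ℂ {A 1} := by
        apply le_antisymm
        · rw [Submodule.span_le, Set.range_subset_iff]
          intro i
          fin_cases i
          · show A 0 ∈ _
            rw [hz0]; exact Submodule.zero_mem _
          · exact Submodule.subset_span rfl
          · show A 2 ∈ _
            rw [hz2]
            exact Submodule.smul_mem _ _ (Submodule.subset_span rfl)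
        · rw [Submodule.span_le, Set.singleton_subset_iff]
          exact Submodule.subset_span ⟨1, rfl⟩
      rw [hspan, finrank_span_singleton hv]
  · exact key
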